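/- Let d ≥ 1, ω ∈ ℕ, and let Q be an axis-aligned query hypercube contained in the grid {0,…,2^ω−1}^d containing #Q grid points. Define cells(Q) as the set of dyadic cells C of the grid with #Q ≤ #C < 2·#Q that intersect Q, where #C is the number of grid points of C. Then the union of the cells in cells(Q) contains at most 2^{d+1}·#Q grid points; i.e. the region covered by cells(Q) has volume at most 2·2^d times that of Q. -/

import Mathlib

/-- The level-`k` dyadic cell of `ℕ^d` with corner `c`:
`Π_j {c_j,…,c_j+2^k−1}`; it contains `2^{kd}` grid points. -/
def cellD (d k : ℕ) (c : Fin d → ℕ) : Set (Fin d → ℕ) :=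
  {x | ∀ j, c j ≤ x j ∧ x j < c j + 2 ^ k}

/-- The axis-aligned box `Π_j {a_j,…,a_j+q−1}` of side length `q`;
it contains `q^d` grid points. -/
def boxD (d q : ℕ) (a : Fin d → ℕ) : Set (Fin d → ℕ) :=
  {x | ∀ j, a j ≤ x j ∧ x j < a j + q}

/-- `cells(Q)` for the query hypercube `Q = Π_j {a_j,…,a_j+q−1}` in the grid
`{0,…,2^ω−1}^d`: the set of dyadic cells `C` of the grid with `#Q ≤ #C < 2·#Q`
(where `#C = 2^{kd}` for a level-`k` cell and `#Q = q^d`) that intersect `Q`. -/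
def cellsQ (d ω q : ℕ) (a : Fin d → ℕ) : Set (Set (Fin d → ℕ)) :=
  {C | ∃ k ≤ ω, ∃ c : Fin d → ℕ, (∀ j, c j < 2 ^ ω ∧ 2 ^ k ∣ c j) ∧
      C = cellD d k c ∧ q ^ d ≤ 2 ^ (k * d) ∧ 2 ^ (k * d) < 2 * q ^ d ∧
      (cellD d k c ∩ boxD d q a).Nonempty}

/-- Let `Q` be an axis-aligned query hypercube contained in the grid
`{0,…,2^ω−1}^d` (`d ≥ 1`) containing `#Q = q^d` grid points.  Then the union of the
cells in `cells(Q)` contains at most `2^{d+1}·#Q` grid points, i.e. the region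
covered by `cells(Q)` has volume at most `2·2^d` times that of `Q`. -/
lemma level_unique (d q k k' : ℕ) (hd : 1 ≤ d)
    (h1 : q ^ d ≤ 2 ^ (k * d)) (h2 : 2 ^ (k * d) < 2 * q ^ d)
    (h1' : q ^ d ≤ 2 ^ (k' * d)) (h2' : 2 ^ (k' * d) < 2 * q ^ d) : k = k' := by
  by_contra hne
  wlog hlt : k < k' generalizing k k'
  · exact this k' k h1' h2' h1 h2 (Ne.symm hne) (by omega)
  have : 2 * q ^ d ≤ 2 ^ (k' * d) := by
    calc 2 * q ^ d ≤ 2 ^ d * 2 ^ (k * d) := by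
          have h2d : (2:ℕ) ≤ 2 ^ d := by
            calc (2:ℕ) = 2 ^ 1 := rfl
            _ ≤ 2 ^ d := Nat.pow_le_pow_right (by norm_num) hd
          exact Nat.mul_le_mul h2d h1
      _ = 2 ^ ((k + 1) * d) := by ring
      _ ≤ 2 ^ (k' * d) := Nat.pow_le_pow_right (by norm_num) (by nlinarith)
  omega

lemma boxD_ncard (d m : ℕ) (b : Fin d → ℕ) : (boxD d m b).ncard = m ^ d := by
  have : boxD d m b = ↑(Fintype.piFinset fun j => Finset.Ico (b j) (b j + m)) := by
    ext x
    simp [boxD, Finset.mem_Ico]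
  rw [this, Set.ncard_coe_finset, Fintype.card_piFinset]
  simp [Nat.card_Ico]

theorem cellsQ_volume (d ω q : ℕ) (hd : 1 ≤ d) (a : Fin d → ℕ)
    (hQ : ∀ j, a j + q ≤ 2 ^ ω) :
    (⋃₀ cellsQ d ω q a).ncard ≤ 2 ^ (d + 1) * q ^ d := by
  rcases Set.eq_empty_or_nonempty (cellsQ d ω q a) with he | ⟨C0, k, hkω, c0, hc0, hC0, hq1, hq2, hne⟩
  · simp [he]
  -- q ≥ 1
  obtain ⟨y, hyC, hyQ⟩ := hne
  have hq0 : 1 ≤ q := by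
    have := hyQ ⟨0, hd⟩
    omega
  have hd0 : d ≠ 0 := by omega
  -- q ≤ 2^k
  have hqk : q ≤ 2 ^ k := by
    have : q ^ d ≤ (2 ^ k) ^ d := by rw [← pow_mul]; exact hq1
    exact (Nat.pow_le_pow_iff_left hd0).mp this
  set b : Fin d → ℕ := fun j => 2 ^ k * (a j / 2 ^ k) with hb
  have hsub : ⋃₀ cellsQ d ω q a ⊆ boxD d (2 ^ (k + 1)) b := by
    rintro x ⟨C, ⟨k', hk'ω, c, hc, rfl, hq1', hq2', ⟨z, hzC, hzQ⟩⟩, hxC⟩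
    have hkk : k = k' := level_unique d q k k' hd hq1 hq2 hq1' hq2'
    subst hkk
    intro j
    have hcj := (hc j).2
    have hbj : 2 ^ k ∣ b j := ⟨a j / 2 ^ k, rfl⟩
    have hba : b j ≤ a j := Nat.mul_div_le _ _
    have hab : a j < b j + 2 ^ k := by
      have h2 := Nat.div_add_mod (a j) (2 ^ k)
      have h3 : a j % 2 ^ k < 2 ^ k := Nat.mod_lt _ (Nat.pow_pos (n := k) (by norm_num))
      simp only [hb]
      omega
    have hz1 := hzC j
    have hz2 := hzQ j
    -- c j ≥ b j
    have hcb : b j ≤ c j := by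
      by_contra h
      push_neg at h
      have : c j + 2 ^ k ≤ b j := by
        have hdvd : 2 ^ k ∣ b j - c j := (Nat.dvd_sub hbj hcj)
        have := Nat.le_of_dvd (by omega) hdvd
        omega
      omega
    -- c j ≤ b j + 2^k
    have hcu : c j ≤ b j + 2 ^ k := by
      by_contra h
      push_neg at h
      have hdvd : 2 ^ k ∣ c j - b j := Nat.dvd_sub hcj hbj
      have h2 : 2 ^ k ∣ c j - b j - 2 ^ k := Nat.dvd_sub hdvd dvd_rfl
      have := Nat.le_of_dvd (by omega) h2
      omega
    have hx := hxC j
    constructor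
    · omega
    · have : x j < c j + 2 ^ k := hx.2
      have : c j < a j + q := by omega
      have : x j < b j + 2 ^ k + 2 ^ k := by omega
      calc x j < b j + 2 ^ k + 2 ^ k := this
        _ = b j + 2 ^ (k + 1) := by ring
  have hfin : (boxD d (2 ^ (k + 1)) b).Finite := by
    have : boxD d (2 ^ (k+1)) b = ↑(Fintype.piFinset fun j => Finset.Ico (b j) (b j + 2 ^ (k+1))) := by
      ext x; simp [boxD, Finset.mem_Ico]
    rw [this]; exact (Fintype.piFinset _).finite_toSet
  calc (⋃₀ cellsQ d ω q a).ncard ≤ (boxD d (2 ^ (k + 1)) b).ncard :=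
        Set.ncard_le_ncard hsub hfin
    _ = (2 ^ (k + 1)) ^ d := boxD_ncard d _ b
    _ = 2 ^ d * 2 ^ (k * d) := by ring
    _ ≤ 2 ^ (d + 1) * q ^ d := by
        calc 2 ^ d * 2 ^ (k * d) ≤ 2 ^ d * (2 * q ^ d) :=
            Nat.mul_le_mul_left _ (le_of_lt hq2)
          _ = 2 ^ (d + 1) * q ^ d := by ring
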